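/- Along any solution (m, n, e) of the inextensible, unshearable, isotropic magnetic rod equations, the quantity I₂ = m·n + B λ e₃ (where e₃ is the third component of e) is constant in t (its derivative vanishes identically). -/

import Mathlib

open Matrix Real

/-- Along any solution `(m, n, e)` of the inextensible, unshearable,
isotropic magnetic rod equations, the quantity `I₂ = m·n + B λ e₃` is constant in `t`:
its derivative vanishes identically. -/
theorem I2_conserved_kirchhoff_magnetic
    (B C lam : ℝ) (hB : 0 < B) (hC : 0 < C)
    (m n e : ℝ → Fin 3 → ℝ)
    (hm : Differentiable ℝ m) (hn : Differentiable ℝ n) (he : Differentiable ℝ e)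
    (u : ℝ → Fin 3 → ℝ) (hu : ∀ t, u t = ![m t 0 / B, m t 1 / B, m t 2 / C])
    (d₃ : Fin 3 → ℝ) (hd₃ : d₃ = ![0, 0, 1])
    (heqm : ∀ t, deriv m t = m t ⨯₃ u t + n t ⨯₃ d₃)
    (heqn : ∀ t, deriv n t = n t ⨯₃ u t + lam • (e t ⨯₃ d₃))
    (heqe : ∀ t, deriv e t = e t ⨯₃ u t) :
    ∀ t, deriv (fun t => m t ⬝ᵥ n t + B * lam * e t 2) t = 0 := by
  intro t
  have hmd : HasDerivAt m (deriv m t) t := (hm t).hasDerivAt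
  have hnd : HasDerivAt n (deriv n t) t := (hn t).hasDerivAt
  have hed : HasDerivAt e (deriv e t) t := (he t).hasDerivAt
  have hmi : ∀ i, HasDerivAt (fun s => m s i) (deriv m t i) t :=
    fun i => hasDerivAt_pi.mp hmd i
  have hni : ∀ i, HasDerivAt (fun s => n s i) (deriv n t i) t :=
    fun i => hasDerivAt_pi.mp hnd i
  have hei : ∀ i, HasDerivAt (fun s => e s i) (deriv e t i) t :=
    fun i => hasDerivAt_pi.mp hed i
  have hfun : (fun s => m s ⬝ᵥ n s + B * lam * e s 2)
      = fun s => (m s 0 * n s 0 + m s 1 * n s 1 + m s 2 * n s 2) + B * lam * e s 2 := by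
    funext s
    simp [dotProduct, Fin.sum_univ_three]
  have hD : HasDerivAt (fun s => m s ⬝ᵥ n s + B * lam * e s 2)
      ((deriv m t 0 * n t 0 + m t 0 * deriv n t 0
        + (deriv m t 1 * n t 1 + m t 1 * deriv n t 1)
        + (deriv m t 2 * n t 2 + m t 2 * deriv n t 2))
        + B * lam * deriv e t 2) t := by
    rw [hfun]
    exact ((((hmi 0).mul (hni 0)).add ((hmi 1).mul (hni 1))).add
      ((hmi 2).mul (hni 2))).add ((hasDerivAt_const t (B * lam)).mul (hei 2))
      |>.congr_deriv (by ring)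
  rw [hD.deriv]
  have h1 := heqm t
  have h2 := heqn t
  have h3 := heqe t
  rw [hu t, hd₃] at h1 h2
  rw [hu t] at h3
  have hm0 := congrFun h1 0
  have hm1 := congrFun h1 1
  have hm2 := congrFun h1 2
  have hn0 := congrFun h2 0
  have hn1 := congrFun h2 1
  have hn2 := congrFun h2 2
  have he2 := congrFun h3 2
  simp [crossProduct] at hm0 hm1 hm2 hn0 hn1 hn2 he2
  rw [hm0, hm1, hm2, hn0, hn1, hn2, he2]
  field_simp
  ring
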